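/- Let M be the set of fixed-point-free involutions in the symmetric group on the set {1, 2, 3, 4, 5, 6} (M has exactly 15 elements), and let the subgroup H of S₆ generated by the 3-cycle (1 2 3) act on M by conjugation. Then this action has exactly 5 orbits, each of size 3. Moreover, the 6 elements of M that map the subset {1, 2, 3} onto the subset {4, 5, 6} form exactly 2 of these orbits, and the remaining 9 elements of M form exactly 3 of these orbits. -/
import Mathlib
set_option maxHeartbeats 1000000
set_option maxRecDepth 10000

def FPFInv : Set (Equiv.Perm (Fin 6)) := {σ | σ * σ = 1 ∧ ∀ i, σ i ≠ i}

def H17 : Subgroup (Equiv.Perm (Fin 6)) :=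
  Subgroup.closure {Equiv.swap 0 1 * Equiv.swap 1 2}

def Orbits17 : Set (Set (Equiv.Perm (Fin 6))) :=
  (fun σ => {τ | ∃ g ∈ H17, g * σ * g⁻¹ = τ}) '' FPFInv

def M17 : Set (Equiv.Perm (Fin 6)) :=
  {σ ∈ FPFInv | (σ : Fin 6 → Fin 6) '' {0, 1, 2} = {3, 4, 5}}

namespace Aux17
open Equiv

def c : Perm (Fin 6) := Equiv.swap 0 1 * Equiv.swap 1 2

def pp (a b c' d e f : Fin 6) : Perm (Fin 6) := Equiv.swap a b * Equiv.swap c' d * Equiv.swap e f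

def F : Finset (Perm (Fin 6)) :=
  {pp 0 1 2 3 4 5, pp 0 1 2 4 3 5, pp 0 1 2 5 3 4,
   pp 0 2 1 3 4 5, pp 0 2 1 4 3 5, pp 0 2 1 5 3 4,
   pp 0 3 1 2 4 5, pp 0 3 1 4 2 5, pp 0 3 1 5 2 4,
   pp 0 4 1 2 3 5, pp 0 4 1 3 2 5, pp 0 4 1 5 2 3,
   pp 0 5 1 2 3 4, pp 0 5 1 3 2 4, pp 0 5 1 4 2 3}

theorem hFmem : ∀ σ : Perm (Fin 6), σ ∈ F ↔ (σ * σ = 1 ∧ ∀ i, σ i ≠ i) := by decide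

theorem hF : FPFInv = ↑F := by
  ext σ; simp only [FPFInv, Set.mem_setOf_eq, Finset.mem_coe, hFmem]

theorem hc3 : c ^ 3 = 1 := by decide

theorem hH : (H17 : Set (Perm (Fin 6))) = {1, c, c ^ 2} := by
  have hzp : H17 = Subgroup.zpowers c := by
    rw [H17, Subgroup.zpowers_eq_closure]; rfl
  ext g
  constructor
  · intro hg
    rw [hzp, SetLike.mem_coe, Subgroup.mem_zpowers_iff] at hg
    obtain ⟨n, rfl⟩ := hg
    have hz3 : c ^ (3 : ℤ) = 1 := by decide
    have h1 : c ^ n = c ^ (n % 3) := by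
      conv_lhs => rw [← Int.mul_ediv_add_emod n 3]
      rw [zpow_add, zpow_mul, hz3, one_zpow, one_mul]
    have h2 : n % 3 = 0 ∨ n % 3 = 1 ∨ n % 3 = 2 := by omega
    rcases h2 with h | h | h <;> rw [h1, h]
    · left; decide
    · right; left; decide
    · right; right; decide
  · intro hg
    rw [hzp]
    rcases hg with rfl | rfl | rfl
    · exact one_mem _
    · exact Subgroup.mem_zpowers c
    · exact Subgroup.zpow_mem _ (Subgroup.mem_zpowers c) 2

def orb (σ : Perm (Fin 6)) : Finset (Perm (Fin 6)) :=
  {σ, c * σ * c⁻¹, c ^ 2 * σ * (c ^ 2)⁻¹}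

theorem horb (σ : Perm (Fin 6)) :
    {τ | ∃ g ∈ H17, g * σ * g⁻¹ = τ} = ↑(orb σ) := by
  ext τ
  simp only [Set.mem_setOf_eq, orb, Finset.coe_insert, Finset.coe_singleton,
    Set.mem_insert_iff, Set.mem_singleton_iff]
  constructor
  · rintro ⟨g, hg, rfl⟩
    have : g ∈ (H17 : Set (Perm (Fin 6))) := hg
    rw [hH] at this
    rcases this with rfl | rfl | rfl
    · left; simp
    · right; left; rfl
    · right; right; rfl
  · rintro (rfl | rfl | rfl)
    · exact ⟨1, one_mem _, by simp⟩
    · exact ⟨c, by have := hH ▸ (by simp : c ∈ ({1, c, c^2} : Set _)); exact this, rfl⟩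
    · exact ⟨c ^ 2, by have := hH ▸ (by simp : c^2 ∈ ({1, c, c^2} : Set _)); exact this, rfl⟩

def MF : Finset (Perm (Fin 6)) :=
  F.filter (fun σ => Finset.image σ {0, 1, 2} = ({3, 4, 5} : Finset (Fin 6)))

def OF : Finset (Finset (Perm (Fin 6))) := F.image orb

def cS (t : Finset (Perm (Fin 6))) : Set (Perm (Fin 6)) := ↑t

theorem ncard_cS (t : Finset (Perm (Fin 6))) : (cS t).ncard = t.card :=
  Set.ncard_coe_finset t

theorem ncard_cS_image (t : Finset (Finset (Perm (Fin 6)))) : (cS '' ↑t).ncard = t.card := by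
  unfold cS
  rw [Set.ncard_image_of_injective _ Finset.coe_injective, Set.ncard_coe_finset]

theorem hM : M17 = ↑MF := by
  ext σ
  simp only [M17, Set.mem_setOf_eq, MF, Finset.coe_filter, hF, Finset.mem_coe]
  refine and_congr Iff.rfl ?_
  rw [← Finset.coe_inj]
  simp [Finset.coe_image, Set.image_insert_eq, Set.image_singleton]

theorem hOrb : Orbits17 = cS '' ↑OF := by
  rw [Orbits17, hF]
  have : (fun σ => {τ | ∃ g ∈ H17, g * σ * g⁻¹ = τ}) = fun σ => (↑(orb σ) : Set (Perm (Fin 6))) :=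
    funext horb
  rw [this, OF, Finset.coe_image, ← Set.image_comp]
  rfl

theorem hd1 : F.card = 15 := by decide
theorem hd2 : OF.card = 5 := by decide
theorem hd4 : MF.card = 6 := by decide
theorem hd5 : (F \ MF).card = 9 := by decide
theorem hd7 : (OF.filter (· ⊆ MF)).card = 2 := by decide
theorem hd8 : (OF.filter (· ⊆ F \ MF)).card = 3 := by decide

theorem hd3' : F.filter (fun σ => ¬ (orb σ).card = 3) = ∅ := by decide
theorem hd6' : F.filter (fun σ => ¬ (orb σ ⊆ MF ∨ orb σ ⊆ F \ MF)) = ∅ := by decide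

theorem hd3 : ∀ σ ∈ F, (orb σ).card = 3 := by
  intro σ hσ
  by_contra h
  have : σ ∈ F.filter (fun σ => ¬ (orb σ).card = 3) := Finset.mem_filter.mpr ⟨hσ, h⟩
  simp [hd3'] at this

theorem hd6 : ∀ σ ∈ F, orb σ ⊆ MF ∨ orb σ ⊆ F \ MF := by
  intro σ hσ
  by_contra h
  have : σ ∈ F.filter (fun σ => ¬ (orb σ ⊆ MF ∨ orb σ ⊆ F \ MF)) := Finset.mem_filter.mpr ⟨hσ, h⟩
  simp only [hd6'] at this
  exact absurd this (Finset.notMem_empty σ)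

end Aux17

theorem stmt17 :
    FPFInv.ncard = 15 ∧
    Orbits17.ncard = 5 ∧
    (∀ S ∈ Orbits17, S.ncard = 3) ∧
    M17.ncard = 6 ∧
    (FPFInv \ M17).ncard = 9 ∧
    (∀ S ∈ Orbits17, S ⊆ M17 ∨ S ⊆ FPFInv \ M17) ∧
    {S ∈ Orbits17 | S ⊆ M17}.ncard = 2 ∧
    {S ∈ Orbits17 | S ⊆ FPFInv \ M17}.ncard = 3 := by
  have h1 := Aux17.hd1
  have h2 := Aux17.hd2
  have h4 := Aux17.hd4
  have h5 := Aux17.hd5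
  have h7 := Aux17.hd7
  have h8 := Aux17.hd8
  have hdiff : FPFInv \ M17 = ↑(Aux17.F \ Aux17.MF) := by
    rw [Aux17.hF, Aux17.hM, Finset.coe_sdiff]
  refine ⟨?_, ?_, ?_, ?_, ?_, ?_, ?_, ?_⟩
  · rw [Aux17.hF, Set.ncard_coe_finset, h1]
  · rw [Aux17.hOrb, Aux17.ncard_cS_image, h2]
  · intro S hS
    rw [Aux17.hOrb] at hS
    obtain ⟨t, ht, rfl⟩ := hS
    rw [Aux17.ncard_cS]
    have ht' : t ∈ Aux17.OF := by simpa using ht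
    obtain ⟨σ, hσ, rfl⟩ := Finset.mem_image.mp ht'
    exact Aux17.hd3 σ hσ
  · rw [Aux17.hM, Set.ncard_coe_finset, h4]
  · rw [hdiff, Set.ncard_coe_finset, h5]
  · intro S hS
    rw [Aux17.hOrb] at hS
    obtain ⟨t, ht, rfl⟩ := hS
    have ht' : t ∈ Aux17.OF := by simpa using ht
    obtain ⟨σ, hσ, rfl⟩ := Finset.mem_image.mp ht'
    rcases Aux17.hd6 σ hσ with h | h
    · left; rw [Aux17.hM]; exact Finset.coe_subset.mpr h
    · right; rw [hdiff]; exact Finset.coe_subset.mpr h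
  · have : {S ∈ Orbits17 | S ⊆ M17} =
        Aux17.cS '' ↑(Aux17.OF.filter (· ⊆ Aux17.MF)) := by
      ext S
      simp only [Set.mem_setOf_eq, Aux17.hOrb, Aux17.hM, Set.mem_image, Finset.mem_coe,
        Finset.mem_filter]
      constructor
      · rintro ⟨⟨t, ht, rfl⟩, hsub⟩
        exact ⟨t, ⟨ht, Finset.coe_subset.mp hsub⟩, rfl⟩
      · rintro ⟨t, ⟨ht, hsub⟩, rfl⟩
        exact ⟨⟨t, ht, rfl⟩, Finset.coe_subset.mpr hsub⟩
    rw [this, Aux17.ncard_cS_image, h7]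
  · have : {S ∈ Orbits17 | S ⊆ FPFInv \ M17} =
        Aux17.cS '' ↑(Aux17.OF.filter (· ⊆ Aux17.F \ Aux17.MF)) := by
      ext S
      simp only [Set.mem_setOf_eq, Aux17.hOrb, hdiff, Set.mem_image, Finset.mem_coe,
        Finset.mem_filter]
      constructor
      · rintro ⟨⟨t, ht, rfl⟩, hsub⟩
        exact ⟨t, ⟨ht, Finset.coe_subset.mp hsub⟩, rfl⟩
      · rintro ⟨t, ⟨ht, hsub⟩, rfl⟩
        exact ⟨⟨t, ht, rfl⟩, Finset.coe_subset.mpr hsub⟩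
    rw [this, Aux17.ncard_cS_image, h8]
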